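/- For any element w of a Coxeter group acting on the root system via the Tits representation, the set of positive real roots α with w·α a negative root is finite; its cardinality equals the Coxeter length of w. -/
import Mathlib


/-!
STATEMENT 1: For any element w of a Coxeter group acting on the root system via the Tits
representation, the set of positive real roots α with w·α a negative root is finite, and its
cardinality equals the Coxeter length of w.
-/

noncomputable def coxEntry {B : Type*} (M : CoxeterMatrix B) (s t : B) : ℝ :=
  if M s t = 0 then -2 else -2 * Real.cos (Real.pi / (M s t))

noncomputable def coxForm {B : Type*} [Fintype B] (M : CoxeterMatrix B) (v w : B → ℝ) : ℝ :=
  ∑ s, ∑ t, v s * w t * coxEntry M s t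

/-- The simple root `α_s` in `RΛ ≅ (B → ℝ)`. -/
noncomputable def simpleRoot {B : Type*} [DecidableEq B] (s : B) : B → ℝ := Pi.single s 1

/-- The set of real roots: the `W`-orbit of the simple roots under the Tits representation. -/
def rootSet {B : Type*} [DecidableEq B] {W : Type*} [Group W]
    (ρ : W →* ((B → ℝ) ≃ₗ[ℝ] (B → ℝ))) : Set (B → ℝ) :=
  {v | ∃ (w : W) (s : B), v = ρ w (simpleRoot s)}

/-- The set of positive real roots: roots lying in the nonnegative span of the simple roots. -/
def posRootSet {B : Type*} [DecidableEq B] {W : Type*} [Group W]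
    (ρ : W →* ((B → ℝ) ≃ₗ[ℝ] (B → ℝ))) : Set (B → ℝ) :=
  {v ∈ rootSet ρ | ∀ i, 0 ≤ v i}

/-- The set of negative real roots. -/
def negRootSet {B : Type*} [DecidableEq B] {W : Type*} [Group W]
    (ρ : W →* ((B → ℝ) ≃ₗ[ℝ] (B → ℝ))) : Set (B → ℝ) :=
  {v | -v ∈ posRootSet ρ}


set_option linter.unusedSectionVars false
set_option maxHeartbeats 1600000

section Basics

variable {B : Type*} [Fintype B] [DecidableEq B] (M : CoxeterMatrix B)

theorem coxEntry_symm (s t : B) : coxEntry M s t = coxEntry M t s := by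
  unfold coxEntry; rw [M.symmetric s t]

theorem coxEntry_self (s : B) : coxEntry M s s = 2 := by
  unfold coxEntry
  rw [M.diagonal s]
  norm_num [Real.cos_pi]

theorem coxForm_single_left (s : B) (v : B → ℝ) :
    coxForm M (simpleRoot s) v = ∑ t, v t * coxEntry M s t := by
  unfold coxForm simpleRoot
  rw [Finset.sum_comm]
  refine Finset.sum_congr rfl fun t _ => ?_
  rw [Finset.sum_eq_single s]
  · simp
  · intro b _ hb; simp [Pi.single_apply, hb]
  · simp

theorem coxForm_symm (v u : B → ℝ) : coxForm M v u = coxForm M u v := by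
  unfold coxForm
  rw [Finset.sum_comm]
  refine Finset.sum_congr rfl fun t _ => Finset.sum_congr rfl fun s _ => ?_
  rw [coxEntry_symm M t s]; ring

theorem coxForm_single_single (s t : B) :
    coxForm M (simpleRoot s) (simpleRoot t) = coxEntry M s t := by
  rw [coxForm_single_left]
  unfold simpleRoot
  rw [Finset.sum_eq_single t]
  · simp
  · intro b _ hb; simp [Pi.single_apply, hb]
  · simp

theorem coxForm_self_single (s : B) : coxForm M (simpleRoot s) (simpleRoot s) = 2 := by
  rw [coxForm_single_single, coxEntry_self]

theorem coxForm_sub_left (x z y : B → ℝ) :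
    coxForm M (x - z) y = coxForm M x y - coxForm M z y := by
  unfold coxForm
  rw [← Finset.sum_sub_distrib]
  refine Finset.sum_congr rfl fun s _ => ?_
  rw [← Finset.sum_sub_distrib]
  refine Finset.sum_congr rfl fun t _ => ?_
  simp [Pi.sub_apply]; ring

theorem coxForm_sub_right (x z y : B → ℝ) :
    coxForm M y (x - z) = coxForm M y x - coxForm M y z := by
  rw [coxForm_symm, coxForm_sub_left, coxForm_symm M x y, coxForm_symm M z y]

theorem coxForm_smul_left (a : ℝ) (x y : B → ℝ) :
    coxForm M (a • x) y = a * coxForm M x y := by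
  unfold coxForm
  rw [Finset.mul_sum]
  refine Finset.sum_congr rfl fun s _ => ?_
  rw [Finset.mul_sum]
  refine Finset.sum_congr rfl fun t _ => ?_
  simp [Pi.smul_apply, smul_eq_mul]; ring

theorem coxForm_smul_right (a : ℝ) (x y : B → ℝ) :
    coxForm M y (a • x) = a * coxForm M y x := by
  rw [coxForm_symm, coxForm_smul_left, coxForm_symm M x y]

theorem coxForm_add_right (x z y : B → ℝ) :
    coxForm M y (x + z) = coxForm M y x + coxForm M y z := by
  have := coxForm_sub_right M (x + z) z y
  simp at this
  linarith [coxForm_sub_right M (x + z) z y]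

theorem coxForm_zero_right (y : B → ℝ) : coxForm M y 0 = 0 := by
  unfold coxForm; simp

end Basics

noncomputable def chebV (c : ℝ) : ℕ → ℝ
  | 0 => 0
  | 1 => 1
  | (k+2) => c * chebV c (k+1) - chebV c k

theorem chebV_sin (θ : ℝ) (k : ℕ) :
    Real.sin θ * chebV (2 * Real.cos θ) k = Real.sin (k * θ) := by
  induction k using Nat.twoStepInduction with
  | zero => simp [chebV]
  | one => simp [chebV]
  | more k ih1 ih2 =>
    have h1 : ((k + 2 : ℕ) : ℝ) * θ = ((k + 1 : ℕ) : ℝ) * θ + θ := by push_cast; ring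
    have h2 : ((k : ℕ) : ℝ) * θ = ((k + 1 : ℕ) : ℝ) * θ - θ := by push_cast; ring
    rw [chebV, h1, Real.sin_add]
    rw [h2, Real.sin_sub] at ih1
    linear_combination (2*Real.cos θ) * ih2 - ih1

theorem chebV_two (k : ℕ) : chebV 2 k = k := by
  induction k using Nat.twoStepInduction with
  | zero => simp [chebV]
  | one => simp [chebV]
  | more k ih1 ih2 => rw [chebV, ih1, ih2]; push_cast; ring

theorem chebV_nonneg_of_le {m k : ℕ} (hm : 2 ≤ m) (hk : k ≤ m) :
    0 ≤ chebV (2 * Real.cos (Real.pi / m)) k := by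
  have hm0 : (0:ℝ) < m := by positivity
  have hθpos : 0 < Real.pi / m := by positivity
  have hθlt : Real.pi / m < Real.pi := by
    rw [div_lt_iff₀ hm0]
    have h2m : (2:ℝ) ≤ m := by exact_mod_cast hm
    nlinarith [Real.pi_pos]
  have hsθ : 0 < Real.sin (Real.pi / m) := Real.sin_pos_of_pos_of_lt_pi hθpos hθlt
  have h := chebV_sin (Real.pi / m) k
  have hsk : 0 ≤ Real.sin (k * (Real.pi / m)) := by
    apply Real.sin_nonneg_of_nonneg_of_le_pi
    · positivity
    · rw [mul_div_assoc']
      rw [div_le_iff₀ hm0]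
      have : (k:ℝ) ≤ m := by exact_mod_cast hk
      nlinarith [Real.pi_pos]
  nlinarith [h, hsθ, hsk]


theorem chebV_nonneg'' {B : Type*} (M : CoxeterMatrix B) {i t : B} (hit : i ≠ t)
    {k : ℕ} (hk : M i t = 0 ∨ k ≤ M i t) : 0 ≤ chebV (-coxEntry M i t) k := by
  unfold coxEntry
  rcases eq_or_ne (M i t) 0 with h0 | h0
  · rw [if_pos h0, neg_neg, chebV_two]
    positivity
  · have hm2 : 2 ≤ M i t := by
      have h1 := M.off_diagonal i t hit
      omega
    rw [if_neg h0,
      show -(-2 * Real.cos (Real.pi / (M i t))) = 2 * Real.cos (Real.pi / (M i t)) by ring]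
    exact chebV_nonneg_of_le hm2 (hk.resolve_left h0)

section Main
variable {B : Type*} [Fintype B] [DecidableEq B] {M : CoxeterMatrix B}
  {W : Type*} [Group W] (cs : CoxeterSystem M W)
  (ρ : W →* ((B → ℝ) ≃ₗ[ℝ] (B → ℝ)))
  (hρ : ∀ (s : B) (v : B → ℝ),
      ρ (cs.simple s) v = v - coxForm M (simpleRoot s) v • simpleRoot s)

include hρ

theorem simple_apply_simpleRoot_self (i : B) :
    ρ (cs.simple i) (simpleRoot i) = -simpleRoot i := by
  rw [hρ, coxForm_self_single]
  module

theorem simple_apply_simpleRoot (i t : B) :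
    ρ (cs.simple t) (simpleRoot i) = simpleRoot i + (-coxEntry M i t) • simpleRoot t := by
  rw [hρ, coxForm_single_single, coxEntry_symm M t i]
  module

theorem simple_apply_coord_ne (i j : B) (hj : j ≠ i) (v : B → ℝ) :
    ρ (cs.simple i) v j = v j := by
  rw [hρ]
  simp [simpleRoot, Pi.single_apply, hj]

theorem mul_apply' (a b : W) (v : B → ℝ) : ρ (a * b) v = ρ a (ρ b v) := by
  rw [map_mul]; rfl

theorem one_apply' (v : B → ℝ) : ρ 1 v = v := by rw [map_one]; rfl

theorem form_invariant_simple (i : B) (x y : B → ℝ) :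
    coxForm M (ρ (cs.simple i) x) (ρ (cs.simple i) y) = coxForm M x y := by
  rw [hρ, hρ]
  rw [coxForm_sub_left, coxForm_smul_left, coxForm_sub_right, coxForm_sub_right,
    coxForm_smul_right, coxForm_smul_right, coxForm_self_single,
    coxForm_symm M x (simpleRoot i), coxForm_symm M (simpleRoot i) y]
  ring

theorem form_invariant (w : W) (v u : B → ℝ) :
    coxForm M (ρ w v) (ρ w u) = coxForm M v u := by
  induction w using cs.simple_induction_left with
  | one => simp [one_apply' cs ρ hρ]
  | mul_simple_left w i ih =>
    simp only [mul_apply' cs ρ hρ]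
    rw [form_invariant_simple cs ρ hρ, ih]

theorem root_form_two {α : B → ℝ} (hα : α ∈ rootSet ρ) : coxForm M α α = 2 := by
  obtain ⟨w, s, rfl⟩ := hα
  rw [form_invariant cs ρ hρ, coxForm_self_single]

theorem not_pos_and_neg {α : B → ℝ} (hα : α ∈ posRootSet ρ) (hα' : α ∈ negRootSet ρ) :
    False := by
  have h0 : α = 0 := by
    funext j
    have h1 := hα.2 j
    have h2 := hα'.2 j
    simp only [Pi.neg_apply] at h2
    simp; linarith
  have := root_form_two cs ρ hρ hα.1
  rw [h0, coxForm_zero_right] at this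
  norm_num at this

open CoxeterSystem in
theorem alt_apply (i t : B) (k : ℕ) :
    ρ (cs.wordProd (alternatingWord i t k)) (simpleRoot i) =
      (if Even k then chebV (-coxEntry M i t) (k+1) else chebV (-coxEntry M i t) k) • simpleRoot i
      + (if Even k then chebV (-coxEntry M i t) k else chebV (-coxEntry M i t) (k+1))
          • simpleRoot t := by
  set c := -coxEntry M i t with hc
  induction k with
  | zero =>
    simp only [alternatingWord, cs.wordProd_nil, one_apply' cs ρ hρ]
    norm_num [chebV]
  | succ k ih =>
    rw [alternatingWord_succ', cs.wordProd_cons, mul_apply' cs ρ hρ, ih]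
    by_cases hek : Even k
    · have hek1 : ¬ Even (k+1) := by simp [Nat.even_add_one, hek]
      simp only [if_pos hek, if_neg hek1]
      rw [map_add, map_smul, map_smul, simple_apply_simpleRoot cs ρ hρ i t,
        simple_apply_simpleRoot_self cs ρ hρ t, ← hc]
      rw [show chebV c (k+1+1) = c * chebV c (k+1) - chebV c k from by rw [chebV]]
      module
    · have hek1 : Even (k+1) := Nat.even_add_one.mpr hek
      simp only [if_neg hek, if_pos hek1]
      have hst : ρ (cs.simple i) (simpleRoot t) = simpleRoot t + c • simpleRoot i := by
        rw [simple_apply_simpleRoot cs ρ hρ t i, coxEntry_symm M t i, ← hc]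
      rw [map_add, map_smul, map_smul, hst, simple_apply_simpleRoot_self cs ρ hρ i]
      rw [show chebV c (k+1+1) = c * chebV c (k+1) - chebV c k from by rw [chebV]]
      module

open CoxeterSystem in
theorem key_lemma (n : ℕ) : ∀ w : W, cs.length w ≤ n → ∀ i : B,
    cs.length w < cs.length (w * cs.simple i) → ∀ j, 0 ≤ ρ w (simpleRoot i) j := by
  induction n with
  | zero =>
    intro w hw i _ j
    have hw1 : w = 1 := cs.length_eq_zero_iff.mp (Nat.le_zero.mp hw)
    subst hw1
    rw [one_apply' cs ρ hρ]
    simp only [simpleRoot, Pi.single_apply]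
    split <;> norm_num
  | succ n ih =>
    intro w hw i hlen j
    by_cases hw1 : w = 1
    · subst hw1
      rw [one_apply' cs ρ hρ]
      simp only [simpleRoot, Pi.single_apply]
      split <;> norm_num
    obtain ⟨t, ht⟩ := cs.exists_rightDescent_of_ne_one hw1
    have hdt : cs.length (w * cs.simple t) < cs.length w := ht
    have hit : i ≠ t := by
      rintro rfl
      omega
    have hlw1 : 1 ≤ cs.length w := by omega
    classical
    set P : ℕ → Prop := fun k => ∃ v : W,
      w = v * cs.wordProd (alternatingWord i t k) ∧ cs.length w = cs.length v + k with hP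
    have hP1 : P 1 := by
      refine ⟨w * cs.simple t, ?_, ?_⟩
      · have h1 : alternatingWord i t 1 = [t] := rfl
        rw [h1, cs.wordProd_singleton, mul_assoc, cs.simple_mul_simple_self, mul_one]
      · have h2 := cs.length_mul_simple w t
        omega
    have hbound : ∀ k, P k → k ≤ cs.length w := by
      rintro k ⟨v, -, hv⟩; omega
    obtain ⟨k, hk, hk1, hkmax⟩ : ∃ k, P k ∧ 1 ≤ k ∧ ∀ k', P k' → k' ≤ k := by
      refine ⟨Nat.findGreatest P (cs.length w), Nat.findGreatest_spec hlw1 hP1,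
        Nat.le_findGreatest hlw1 hP1, ?_⟩
      intro k' hk'
      by_contra h
      push_neg at h
      exact Nat.findGreatest_is_greatest h (hbound k' hk') hk'
    obtain ⟨v, hw_eq, hlen_eq⟩ := hk
    have claimA : ∀ x : B, x = i ∨ x = t → cs.length v < cs.length (v * cs.simple x) := by
      intro x hx
      rcases cs.length_mul_simple v x with hup | hdown
      · omega
      · exfalso
        by_cases hxy : x = (if Even k then t else i)
        · have hPk1 : P (k+1) := by
            refine ⟨v * cs.simple x, ?_, ?_⟩
            · rw [alternatingWord_succ', cs.wordProd_cons, ← hxy, hw_eq, mul_assoc,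
                cs.simple_mul_simple_cancel_left]
            · omega
          have := hkmax _ hPk1; omega
        · obtain ⟨k', rfl⟩ : ∃ k', k = k' + 1 := ⟨k - 1, by omega⟩
          have hy : (if Even (k'+1) then t else i) = (if Even k' then i else t) := by
            by_cases he : Even k' <;> simp [Nat.even_add_one, he]
          rw [hy] at hxy
          have hxh : x = (if Even k' then t else i) := by
            by_cases he : Even k' <;> simp only [if_pos, if_neg, he, if_true, if_false] at hxy ⊢ <;> tauto
          have hsplit : w = (v * cs.simple x) * cs.wordProd (alternatingWord i t k') := by
            rw [hw_eq, alternatingWord_succ', cs.wordProd_cons, ← hxh, mul_assoc]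
          have h1 : cs.length w ≤ cs.length (v * cs.simple x) +
              cs.length (cs.wordProd (alternatingWord i t k')) := by
            rw [hsplit]; exact cs.length_mul_le _ _
          have h2 := cs.length_wordProd_le (alternatingWord i t k')
          rw [CoxeterSystem.length_alternatingWord] at h2
          omega
    have claimC : M i t = 0 ∨ k + 1 ≤ M i t := by
      by_cases hm0 : M i t = 0
      · exact Or.inl hm0
      right
      by_contra hcon
      push_neg at hcon
      have hm1 : 1 ≤ M i t := Nat.one_le_iff_ne_zero.mpr hm0
      have hmk : M i t ≤ k := by omega
      rcases Nat.lt_or_ge k (2 * M i t) with hk2 | hk2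
      · have hsub := cs.prod_alternatingWord_eq_prod_alternatingWord_sub i t k (by omega)
        obtain ⟨r, hr⟩ : ∃ r, M.M i t * 2 - k = r + 1 := ⟨M.M i t * 2 - k - 1, by omega⟩
        have hconc : alternatingWord t i (r+1) = (alternatingWord i t r).concat i :=
          CoxeterSystem.alternatingWord_succ t i r
        have hws : w * cs.simple i = v * cs.wordProd (alternatingWord i t r) := by
          rw [hw_eq, hsub, hr, hconc, cs.wordProd_concat, mul_assoc, mul_assoc,
            cs.simple_mul_simple_self, mul_one]
        have h1 : cs.length (w * cs.simple i) ≤ cs.length v +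
            cs.length (cs.wordProd (alternatingWord i t r)) := by
          rw [hws]; exact cs.length_mul_le _ _
        have h2 := cs.length_wordProd_le (alternatingWord i t r)
        rw [CoxeterSystem.length_alternatingWord] at h2
        have hrk : r + 1 + k = M.M i t * 2 := by omega
        omega
      · have e1 := cs.prod_alternatingWord_eq_mul_pow i t k
        have e2 := cs.prod_alternatingWord_eq_mul_pow i t (k - 2 * M i t)
        have epar : Even (k - 2 * M i t) ↔ Even k := by
          rw [Nat.even_sub (by omega)]; simp
        have hpow : (cs.simple i * cs.simple t) ^ (k / 2)
            = (cs.simple i * cs.simple t) ^ ((k - 2 * M i t) / 2) := by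
          have hdiv : k / 2 = (k - 2 * M i t) / 2 + M i t := by omega
          rw [hdiv, pow_add, cs.simple_mul_simple_pow, mul_one]
        have heq : cs.wordProd (alternatingWord i t k)
            = cs.wordProd (alternatingWord i t (k - 2 * M i t)) := by
          rw [e1, e2, hpow]
          simp only [epar]
        have h1 : cs.length w ≤ cs.length v +
            cs.length (cs.wordProd (alternatingWord i t (k - 2 * M i t))) := by
          rw [hw_eq, heq]; exact cs.length_mul_le _ _
        have h2 := cs.length_wordProd_le (alternatingWord i t (k - 2 * M i t))
        rw [CoxeterSystem.length_alternatingWord] at h2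
        omega
    have hvlen : cs.length v ≤ n := by omega
    have hposi : ∀ j', 0 ≤ ρ v (simpleRoot i) j' :=
      fun j' => ih v hvlen i (claimA i (Or.inl rfl)) j'
    have hpost : ∀ j', 0 ≤ ρ v (simpleRoot t) j' :=
      fun j' => ih v hvlen t (claimA t (Or.inr rfl)) j'
    have hchb : ∀ k', k' ≤ k + 1 → 0 ≤ chebV (-coxEntry M i t) k' := by
      intro k' hk'
      refine chebV_nonneg'' M hit ?_
      rcases claimC with h | h
      · exact Or.inl h
      · exact Or.inr (by omega)
    have ha : 0 ≤ (if Even k then chebV (-coxEntry M i t) (k+1) else chebV (-coxEntry M i t) k) := by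
      split <;> [exact hchb _ le_rfl; exact hchb _ (by omega)]
    have hb : 0 ≤ (if Even k then chebV (-coxEntry M i t) k else chebV (-coxEntry M i t) (k+1)) := by
      split <;> [exact hchb _ (by omega); exact hchb _ le_rfl]
    rw [hw_eq, mul_apply' cs ρ hρ, alt_apply cs ρ hρ i t k, map_add, map_smul, map_smul]
    simp only [Pi.add_apply, Pi.smul_apply, smul_eq_mul]
    exact add_nonneg (mul_nonneg ha (hposi j)) (mul_nonneg hb (hpost j))

theorem key_lemma' (w : W) (i : B) (h : cs.length w < cs.length (w * cs.simple i)) :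
    ρ w (simpleRoot i) ∈ posRootSet ρ :=
  ⟨⟨w, i, rfl⟩, key_lemma cs ρ hρ (cs.length w) w le_rfl i h⟩

theorem invol (i : B) (x : B → ℝ) : ρ (cs.simple i) (ρ (cs.simple i) x) = x := by
  rw [← mul_apply' cs ρ hρ, cs.simple_mul_simple_self, one_apply' cs ρ hρ]

theorem neg_of_descent (w : W) (i : B) (h : cs.length (w * cs.simple i) < cs.length w) :
    ρ w (simpleRoot i) ∈ negRootSet ρ := by
  have hpos := key_lemma' cs ρ hρ (w * cs.simple i) i
    (by rw [mul_assoc, cs.simple_mul_simple_self, mul_one]; exact h)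
  show -(ρ w (simpleRoot i)) ∈ posRootSet ρ
  have heq : -(ρ w (simpleRoot i)) = ρ (w * cs.simple i) (simpleRoot i) := by
    rw [mul_apply' cs ρ hρ, simple_apply_simpleRoot_self cs ρ hρ, map_neg]
  rw [heq]
  exact hpos

theorem root_pos_or_neg {α : B → ℝ} (hα : α ∈ rootSet ρ) :
    α ∈ posRootSet ρ ∨ α ∈ negRootSet ρ := by
  obtain ⟨w, i, rfl⟩ := hα
  rcases cs.length_mul_simple w i with h | h
  · exact Or.inl (key_lemma' cs ρ hρ w i (by omega))
  · exact Or.inr (neg_of_descent cs ρ hρ w i (by omega))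

theorem simpleRoot_mem_pos (i : B) : simpleRoot i ∈ posRootSet ρ := by
  refine ⟨⟨1, i, (one_apply' cs ρ hρ _).symm⟩, fun j => ?_⟩
  simp only [simpleRoot, Pi.single_apply]
  split <;> norm_num

theorem simple_perm_pos {i : B} {α : B → ℝ} (hα : α ∈ posRootSet ρ) (hne : α ≠ simpleRoot i) :
    ρ (cs.simple i) α ∈ posRootSet ρ ∧ ρ (cs.simple i) α ≠ simpleRoot i := by
  have hroot : ρ (cs.simple i) α ∈ rootSet ρ := by
    obtain ⟨u, s0, h⟩ := hα.1
    exact ⟨cs.simple i * u, s0, by rw [mul_apply' cs ρ hρ, ← h]⟩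
  have hmain : ρ (cs.simple i) α ∈ posRootSet ρ := by
    rcases root_pos_or_neg cs ρ hρ hroot with hpos | hneg
    · exact hpos
    · exfalso
      have hcoords : ∀ j, j ≠ i → α j = 0 := by
        intro j hj
        have h1 : ρ (cs.simple i) α j = α j := simple_apply_coord_ne cs ρ hρ i j hj α
        have h2 := hneg.2 j
        simp only [Pi.neg_apply] at h2
        have h3 := hα.2 j
        linarith [h1 ▸ h2]
      have hform : α = α i • simpleRoot i := by
        funext j
        by_cases hj : j = i
        · subst hj; simp [simpleRoot, Pi.single_apply]
        · simp [simpleRoot, Pi.single_apply, hj, hcoords j hj]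
      have h2 : coxForm M α α = 2 := root_form_two cs ρ hρ hα.1
      rw [hform, coxForm_smul_left, coxForm_smul_right, coxForm_self_single] at h2
      have hsq : (α i) ^ 2 = 1 := by nlinarith
      have hge : 0 ≤ α i := hα.2 i
      have hα1 : α i = 1 := by nlinarith
      rw [hα1, one_smul] at hform
      exact hne hform
  refine ⟨hmain, fun heq => ?_⟩
  have : α = ρ (cs.simple i) (simpleRoot i) := by
    rw [← heq, invol cs ρ hρ]
  rw [simple_apply_simpleRoot_self cs ρ hρ] at this
  have h1 := hα.2 i
  rw [this] at h1
  simp [simpleRoot, Pi.single_apply] at h1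
  linarith

theorem inversions_count (n : ℕ) : ∀ w : W, cs.length w = n →
    {α | α ∈ posRootSet ρ ∧ ρ w α ∈ negRootSet ρ}.Finite ∧
    {α | α ∈ posRootSet ρ ∧ ρ w α ∈ negRootSet ρ}.ncard = n := by
  induction n with
  | zero =>
    intro w hw
    have hw1 : w = 1 := cs.length_eq_zero_iff.mp hw
    subst hw1
    have he : {α | α ∈ posRootSet ρ ∧ ρ (1:W) α ∈ negRootSet ρ} = (∅ : Set (B → ℝ)) := by
      ext α
      simp only [Set.mem_setOf_eq, Set.mem_empty_iff_false, iff_false, not_and]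
      intro h1 h2
      rw [one_apply' cs ρ hρ] at h2
      exact not_pos_and_neg cs ρ hρ h1 h2
    rw [he]
    exact ⟨Set.finite_empty, Set.ncard_empty _⟩
  | succ n ih =>
    intro w hw
    have hw1 : w ≠ 1 := by
      intro h
      subst h
      rw [cs.length_eq_zero_iff.mpr rfl] at hw
      omega
    obtain ⟨is, hdes⟩ := cs.exists_rightDescent_of_ne_one hw1
    have hdes' : cs.length (w * cs.simple is) < cs.length w := hdes
    have hlen' : cs.length (w * cs.simple is) = n := by
      have := cs.length_mul_simple w is
      omega
    set w' := w * cs.simple is with hw'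
    have hwrec : w = w' * cs.simple is := by
      rw [hw', mul_assoc, cs.simple_mul_simple_self, mul_one]
    obtain ⟨hfin', hcard'⟩ := ih w' hlen'
    have hkey : ∀ β : B → ℝ, β ∈ posRootSet ρ → ρ w' β ∈ negRootSet ρ → β ≠ simpleRoot is := by
      intro β hβpos hβneg h
      subst h
      refine not_pos_and_neg cs ρ hρ (key_lemma' cs ρ hρ w' is ?_) hβneg
      rw [← hwrec]
      omega
    have hset : {α | α ∈ posRootSet ρ ∧ ρ w α ∈ negRootSet ρ}
        = insert (simpleRoot is)
          ((fun α => ρ (cs.simple is) α) ''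
            {α | α ∈ posRootSet ρ ∧ ρ w' α ∈ negRootSet ρ}) := by
      ext α
      simp only [Set.mem_setOf_eq, Set.mem_insert_iff, Set.mem_image]
      constructor
      · rintro ⟨hpos, hneg⟩
        by_cases hαi : α = simpleRoot is
        · exact Or.inl hαi
        · right
          refine ⟨ρ (cs.simple is) α, ⟨(simple_perm_pos cs ρ hρ hpos hαi).1, ?_⟩,
            invol cs ρ hρ is α⟩
          rw [← mul_apply' cs ρ hρ, ← hwrec]
          exact hneg
      · rintro (rfl | ⟨β, ⟨hβpos, hβneg⟩, rfl⟩)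
        · exact ⟨simpleRoot_mem_pos cs ρ hρ is, neg_of_descent cs ρ hρ w is hdes'⟩
        · have hβne : β ≠ simpleRoot is := hkey β hβpos hβneg
          refine ⟨(simple_perm_pos cs ρ hρ hβpos hβne).1, ?_⟩
          have : ρ w (ρ (cs.simple is) β) = ρ w' β := by
            rw [← mul_apply' cs ρ hρ, ← hw']
          rw [this]
          exact hβneg
    have hnotmem : simpleRoot is ∉
        ((fun α => ρ (cs.simple is) α) '' {α | α ∈ posRootSet ρ ∧ ρ w' α ∈ negRootSet ρ}) := by
      rintro ⟨β, ⟨hβpos, hβneg⟩, hβeq⟩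
      exact (simple_perm_pos cs ρ hρ hβpos (hkey β hβpos hβneg)).2 hβeq
    have hinj : Function.Injective (fun α : B → ℝ => ρ (cs.simple is) α) :=
      (ρ (cs.simple is)).injective
    have hfinimg : ((fun α => ρ (cs.simple is) α) ''
        {α | α ∈ posRootSet ρ ∧ ρ w' α ∈ negRootSet ρ}).Finite := hfin'.image _
    rw [hset]
    refine ⟨hfinimg.insert _, ?_⟩
    rw [Set.ncard_insert_of_notMem hnotmem hfinimg,
      Set.ncard_image_of_injective _ hinj, hcard']

end Main

theorem finite_inversions_and_card_eq_length
    {B : Type*} [Fintype B] [DecidableEq B] (M : CoxeterMatrix B)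
    {W : Type*} [Group W] (cs : CoxeterSystem M W)
    (ρ : W →* ((B → ℝ) ≃ₗ[ℝ] (B → ℝ)))
    (hρ : ∀ (s : B) (v : B → ℝ),
      ρ (cs.simple s) v = v - coxForm M (simpleRoot s) v • simpleRoot s)
    (w : W) :
    {α | α ∈ posRootSet ρ ∧ ρ w α ∈ negRootSet ρ}.Finite ∧
      {α | α ∈ posRootSet ρ ∧ ρ w α ∈ negRootSet ρ}.ncard = cs.length w := by
  exact inversions_count cs ρ hρ (cs.length w) w rfl
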